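/- There exist a probability space (Ω, F, P), a random variable Y : Ω → {0,1}, and random variables S¹, S² : Ω → [0,1] such that E[Y | σ(S¹)] = S¹ almost surely and E[Y | σ(S²)] = S² almost surely, yet the average S̄ := (S¹ + S²)/2 is not calibrated: P(E[Y | σ(S̄)] ≠ S̄) > 0. A witness: S¹, S² each take values in {0.25, 0.75}, the pair (S¹,S²) is uniform on the four combinations, and conditionally on (S¹,S²), Y is Bernoulli with parameter m(0.25,0.25)=0, m(0.25,0.75)=m(0.75,0.25)=0.5, m(0.75,0.75)=1; then P(S̄ = 0.25) = 1/4 while E[Y | S̄ = 0.25] = 0. -/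

import Mathlib

open MeasureTheory
open scoped ENNReal

namespace AvgCal

abbrev Om : Type := Fin 2 × Fin 2 × Fin 2

noncomputable def P : Measure Om := (8:ℝ≥0∞)⁻¹ • Measure.count

lemma meas_all {β : Type*} [MeasurableSpace β] (f : Om → β) : Measurable f :=
  fun _ _ => (Set.toFinite _).measurableSet

lemma P_finset (F : Finset Om) : P ↑F = F.card / 8 := by
  simp [P, Measure.count_apply_finset, ENNReal.div_eq_inv_mul]

instance : IsProbabilityMeasure P := by
  constructor
  have h : (Set.univ : Set Om) = ↑(Finset.univ : Finset Om) := by simp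
  rw [h, P_finset]
  norm_num
  exact ENNReal.div_self (by norm_num) (by norm_num)

lemma P_singleton (x : Om) : P {x} = 8⁻¹ := by
  have h : ({x} : Set Om) = ↑({x} : Finset Om) := by simp
  rw [h, P_finset]
  simp [ENNReal.div_eq_inv_mul]

lemma setIntegral_P (F : Finset Om) (f : Om → ℝ) :
    ∫ x in ↑F, f x ∂P = ∑ x ∈ F, f x / 8 := by
  rw [integral_finset F (f := f) (Integrable.of_finite.integrableOn)]
  refine Finset.sum_congr rfl fun x _ => ?_
  rw [measureReal_def, P_singleton]
  norm_num [ENNReal.toReal_inv]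
  ring

lemma P_pair (x y : Om) (hxy : x ≠ y) : P ↑({x, y} : Finset Om) = 1 / 4 := by
  rw [P_finset, Finset.card_pair hxy]
  rw [show (((2:ℕ)):ℝ≥0∞) = 2 from rfl, ENNReal.div_eq_div_iff] <;> norm_num

lemma P_one (x : Om) : P ↑({x} : Finset Om) = 1 / 8 := by
  rw [P_finset, Finset.card_singleton]
  norm_num

lemma P_zero : P ↑(∅ : Finset Om) = 0 := by
  rw [P_finset]; norm_num

def Y (ω : Om) : ℝ :=
  if ω.1 = ω.2.1 then (if ω.1 = 1 then 1 else 0) else (if ω.2.2 = 1 then 1 else 0)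

def S1 (ω : Om) : ℝ := if ω.1 = 0 then 0.25 else 0.75

def S2 (ω : Om) : ℝ := if ω.2.1 = 0 then 0.25 else 0.75

lemma calib1 : P[Y | MeasurableSpace.comap S1 (inferInstance : MeasurableSpace ℝ)] =ᵐ[P] S1 := by
  have hm : MeasurableSpace.comap S1 inferInstance ≤ (inferInstance : MeasurableSpace Om) :=
    (meas_all S1).comap_le
  refine (ae_eq_condExp_of_forall_setIntegral_eq hm Integrable.of_finite
    (fun s _ _ => Integrable.of_finite.integrableOn) (fun s hs _ => ?_) ?_).symm
  · obtain ⟨A, -, rfl⟩ := hs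
    by_cases h1 : (0.25:ℝ) ∈ A <;> by_cases h2 : (0.75:ℝ) ∈ A
    · have h : S1 ⁻¹' A = ↑(Finset.univ : Finset Om) := by
        ext ω; fin_cases ω <;> simp [S1, h1, h2]
      rw [h, setIntegral_P, setIntegral_P]
      norm_num [Y, S1, Fintype.sum_prod_type, Fin.sum_univ_two]
    · have h : S1 ⁻¹' A = ↑({(0,0,0),(0,0,1),(0,1,0),(0,1,1)} : Finset Om) := by
        ext ω; fin_cases ω <;> simp [S1, h1, h2] <;> decide
      rw [h, setIntegral_P, setIntegral_P]
      norm_num [Y, S1, Finset.sum_insert, Finset.mem_insert, Finset.mem_singleton,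
        Prod.ext_iff]
    · have h : S1 ⁻¹' A = ↑({(1,0,0),(1,0,1),(1,1,0),(1,1,1)} : Finset Om) := by
        ext ω; fin_cases ω <;> simp [S1, h1, h2] <;> decide
      rw [h, setIntegral_P, setIntegral_P]
      norm_num [Y, S1, Finset.sum_insert, Finset.mem_insert, Finset.mem_singleton,
        Prod.ext_iff]
    · have h : S1 ⁻¹' A = ↑(∅ : Finset Om) := by
        ext ω; fin_cases ω <;> simp [S1, h1, h2]
      rw [h, setIntegral_P, setIntegral_P]
      simp
  · exact ((Measurable.of_comap_le le_rfl).stronglyMeasurable).aestronglyMeasurable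

lemma calib2 : P[Y | MeasurableSpace.comap S2 (inferInstance : MeasurableSpace ℝ)] =ᵐ[P] S2 := by
  have hm : MeasurableSpace.comap S2 inferInstance ≤ (inferInstance : MeasurableSpace Om) :=
    (meas_all S2).comap_le
  refine (ae_eq_condExp_of_forall_setIntegral_eq hm Integrable.of_finite
    (fun s _ _ => Integrable.of_finite.integrableOn) (fun s hs _ => ?_) ?_).symm
  · obtain ⟨A, -, rfl⟩ := hs
    by_cases h1 : (0.25:ℝ) ∈ A <;> by_cases h2 : (0.75:ℝ) ∈ A
    · have h : S2 ⁻¹' A = ↑(Finset.univ : Finset Om) := by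
        ext ω; fin_cases ω <;> simp [S2, h1, h2]
      rw [h, setIntegral_P, setIntegral_P]
      norm_num [Y, S2, Fintype.sum_prod_type, Fin.sum_univ_two]
    · have h : S2 ⁻¹' A = ↑({(0,0,0),(0,0,1),(1,0,0),(1,0,1)} : Finset Om) := by
        ext ω; fin_cases ω <;> simp [S2, h1, h2] <;> decide
      rw [h, setIntegral_P, setIntegral_P]
      norm_num [Y, S2, Finset.sum_insert, Finset.mem_insert, Finset.mem_singleton,
        Prod.ext_iff]
    · have h : S2 ⁻¹' A = ↑({(0,1,0),(0,1,1),(1,1,0),(1,1,1)} : Finset Om) := by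
        ext ω; fin_cases ω <;> simp [S2, h1, h2] <;> decide
      rw [h, setIntegral_P, setIntegral_P]
      norm_num [Y, S2, Finset.sum_insert, Finset.mem_insert, Finset.mem_singleton,
        Prod.ext_iff]
    · have h : S2 ⁻¹' A = ↑(∅ : Finset Om) := by
        ext ω; fin_cases ω <;> simp [S2, h1, h2]
      rw [h, setIntegral_P, setIntegral_P]
      simp
  · exact ((Measurable.of_comap_le le_rfl).stronglyMeasurable).aestronglyMeasurable

end AvgCal

open AvgCal

set_option maxHeartbeats 1000000 in
theorem averaging_breaks_calibration :
    ∃ (Ω : Type) (_ : MeasurableSpace Ω) (P : Measure Ω),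
      IsProbabilityMeasure P ∧
      ∃ Y S1 S2 : Ω → ℝ,
        Measurable Y ∧ (∀ ω, Y ω = 0 ∨ Y ω = 1) ∧
        Measurable S1 ∧ Measurable S2 ∧
        (∀ ω, S1 ω = 0.25 ∨ S1 ω = 0.75) ∧
        (∀ ω, S2 ω = 0.25 ∨ S2 ω = 0.75) ∧
        (∀ a ∈ ({0.25, 0.75} : Set ℝ), ∀ b ∈ ({0.25, 0.75} : Set ℝ),
          P {ω | S1 ω = a ∧ S2 ω = b} = 1 / 4 ∧
          P {ω | Y ω = 1 ∧ S1 ω = a ∧ S2 ω = b}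
            = ENNReal.ofReal ((a + b - 1 / 2) / 4)) ∧
        (P[Y | MeasurableSpace.comap S1 inferInstance] =ᵐ[P] S1) ∧
        (P[Y | MeasurableSpace.comap S2 inferInstance] =ᵐ[P] S2) ∧
        P {ω | (S1 ω + S2 ω) / 2 = 0.25} = 1 / 4 ∧
        P {ω | Y ω = 1 ∧ (S1 ω + S2 ω) / 2 = 0.25} = 0 ∧
        0 < P {ω | (P[Y | MeasurableSpace.comap (fun ω' => (S1 ω' + S2 ω') / 2)
                        inferInstance]) ω ≠ (S1 ω + S2 ω) / 2} := by
  refine ⟨Om, inferInstance, AvgCal.P, inferInstance, AvgCal.Y, AvgCal.S1, AvgCal.S2,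
    meas_all _, ?_, meas_all _, meas_all _, ?_, ?_, ?_, calib1, calib2, ?_, ?_, ?_⟩
  · intro ω; unfold AvgCal.Y; split <;> split <;> simp
  · intro ω; unfold AvgCal.S1; split <;> simp
  · intro ω; unfold AvgCal.S2; split <;> simp
  · -- joint distribution
    intro a ha b hb
    simp only [Set.mem_insert_iff, Set.mem_singleton_iff] at ha hb
    rcases ha with rfl | rfl <;> rcases hb with rfl | rfl
    · constructor
      · have h : {ω | AvgCal.S1 ω = 0.25 ∧ AvgCal.S2 ω = 0.25}
            = ↑({(0,0,0),(0,0,1)} : Finset Om) := by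
          ext ω; fin_cases ω <;> simp [AvgCal.S1, AvgCal.S2, Prod.ext_iff] <;> norm_num
        rw [h, P_pair _ _ (by decide)]
      · have h : {ω | AvgCal.Y ω = 1 ∧ AvgCal.S1 ω = 0.25 ∧ AvgCal.S2 ω = 0.25}
            = ↑(∅ : Finset Om) := by
          ext ω; fin_cases ω <;>
            simp [AvgCal.Y, AvgCal.S1, AvgCal.S2, Prod.ext_iff] <;> norm_num
        rw [h, P_zero, show ((0.25:ℝ)+0.25-1/2)/4 = 0 by norm_num]
        simp
    · constructor
      · have h : {ω | AvgCal.S1 ω = 0.25 ∧ AvgCal.S2 ω = 0.75}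
            = ↑({(0,1,0),(0,1,1)} : Finset Om) := by
          ext ω; fin_cases ω <;> simp [AvgCal.S1, AvgCal.S2, Prod.ext_iff] <;> norm_num
        rw [h, P_pair _ _ (by decide)]
      · have h : {ω | AvgCal.Y ω = 1 ∧ AvgCal.S1 ω = 0.25 ∧ AvgCal.S2 ω = 0.75}
            = ↑({(0,1,1)} : Finset Om) := by
          ext ω; fin_cases ω <;>
            simp [AvgCal.Y, AvgCal.S1, AvgCal.S2, Prod.ext_iff] <;> norm_num
        rw [h, P_one]
        rw [show ((0.25:ℝ)+0.75-1/2)/4 = 1/8 by norm_num]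
        rw [ENNReal.ofReal_div_of_pos (by norm_num)]
        norm_num
    · constructor
      · have h : {ω | AvgCal.S1 ω = 0.75 ∧ AvgCal.S2 ω = 0.25}
            = ↑({(1,0,0),(1,0,1)} : Finset Om) := by
          ext ω; fin_cases ω <;> simp [AvgCal.S1, AvgCal.S2, Prod.ext_iff] <;> norm_num
        rw [h, P_pair _ _ (by decide)]
      · have h : {ω | AvgCal.Y ω = 1 ∧ AvgCal.S1 ω = 0.75 ∧ AvgCal.S2 ω = 0.25}
            = ↑({(1,0,1)} : Finset Om) := by
          ext ω; fin_cases ω <;>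
            simp [AvgCal.Y, AvgCal.S1, AvgCal.S2, Prod.ext_iff] <;> norm_num
        rw [h, P_one]
        rw [show ((0.75:ℝ)+0.25-1/2)/4 = 1/8 by norm_num]
        rw [ENNReal.ofReal_div_of_pos (by norm_num)]
        norm_num
    · constructor
      · have h : {ω | AvgCal.S1 ω = 0.75 ∧ AvgCal.S2 ω = 0.75}
            = ↑({(1,1,0),(1,1,1)} : Finset Om) := by
          ext ω; fin_cases ω <;> simp [AvgCal.S1, AvgCal.S2, Prod.ext_iff] <;> norm_num
        rw [h, P_pair _ _ (by decide)]
      · have h : {ω | AvgCal.Y ω = 1 ∧ AvgCal.S1 ω = 0.75 ∧ AvgCal.S2 ω = 0.75}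
            = ↑({(1,1,0),(1,1,1)} : Finset Om) := by
          ext ω; fin_cases ω <;>
            simp [AvgCal.Y, AvgCal.S1, AvgCal.S2, Prod.ext_iff] <;> norm_num
        rw [h, P_pair _ _ (by decide)]
        rw [show ((0.75:ℝ)+0.75-1/2)/4 = 1/4 by norm_num]
        rw [ENNReal.ofReal_div_of_pos (by norm_num)]
        norm_num
  · -- P(Sbar = 1/4) = 1/4
    have h : {ω | (AvgCal.S1 ω + AvgCal.S2 ω) / 2 = 0.25}
        = ↑({(0,0,0),(0,0,1)} : Finset Om) := by
      ext ω; fin_cases ω <;> simp [AvgCal.S1, AvgCal.S2, Prod.ext_iff] <;> norm_num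
    rw [h, P_pair _ _ (by decide)]
  · -- P(Y = 1 and Sbar = 1/4) = 0
    have h : {ω | AvgCal.Y ω = 1 ∧ (AvgCal.S1 ω + AvgCal.S2 ω) / 2 = 0.25}
        = ↑(∅ : Finset Om) := by
      ext ω; fin_cases ω <;>
        simp [AvgCal.Y, AvgCal.S1, AvgCal.S2, Prod.ext_iff] <;> norm_num
    rw [h, P_zero]
  · -- miscalibration of the average
    set Sb : Om → ℝ := fun ω' => (AvgCal.S1 ω' + AvgCal.S2 ω') / 2 with hSb
    have hm : MeasurableSpace.comap Sb inferInstance ≤ (inferInstance : MeasurableSpace Om) :=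
      (meas_all Sb).comap_le
    rw [pos_iff_ne_zero]
    intro h0
    have hae : AvgCal.P[AvgCal.Y | MeasurableSpace.comap Sb inferInstance]
        =ᵐ[AvgCal.P] Sb := ae_iff.mpr h0
    have hB : MeasurableSet[MeasurableSpace.comap Sb inferInstance] (Sb ⁻¹' {0.25}) :=
      ⟨{0.25}, measurableSet_singleton _, rfl⟩
    have e1 : ∫ x in Sb ⁻¹' {0.25},
          (AvgCal.P[AvgCal.Y | MeasurableSpace.comap Sb inferInstance]) x ∂AvgCal.P
        = ∫ x in Sb ⁻¹' {0.25}, AvgCal.Y x ∂AvgCal.P :=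
      setIntegral_condExp hm Integrable.of_finite hB
    have e2 : ∫ x in Sb ⁻¹' {0.25},
          (AvgCal.P[AvgCal.Y | MeasurableSpace.comap Sb inferInstance]) x ∂AvgCal.P
        = ∫ x in Sb ⁻¹' {0.25}, Sb x ∂AvgCal.P :=
      integral_congr_ae (ae_restrict_of_ae hae)
    have hBF : Sb ⁻¹' {0.25} = ↑({(0,0,0),(0,0,1)} : Finset Om) := by
      ext ω; fin_cases ω <;>
        simp [hSb, AvgCal.S1, AvgCal.S2, Prod.ext_iff] <;> norm_num
    rw [hBF, setIntegral_P] at e1 e2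
    rw [setIntegral_P] at e1
    rw [setIntegral_P] at e2
    have := e2.symm.trans e1
    norm_num [hSb, AvgCal.Y, AvgCal.S1, AvgCal.S2, Finset.sum_insert, Finset.mem_insert,
      Finset.mem_singleton, Prod.ext_iff] at this
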